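/- For every natural number n ≥ 5, the vectors ψ_j (j = 0, …, n−1) in ℝ³ defined by ψ_j = (1/√(1+cos(π/n))) · (cos(j(n−1)π/n), sin(j(n−1)π/n), √(cos(π/n))) are unit vectors, and consecutive vectors are orthogonal: ⟨ψ_j, ψ_{j+1}⟩ = 0 for all j (indices mod n). -/

import Mathlib

open Real

theorem stmt_2 (n : ℕ) (hn : 5 ≤ n) (ψ : ℕ → EuclideanSpace ℝ (Fin 3))
    (hψ : ∀ j : ℕ, ψ j = (1 / Real.sqrt (1 + Real.cos (π / n))) •
      (WithLp.toLp 2 ![Real.cos (j * ((n - 1) * π / n)), Real.sin (j * ((n - 1) * π / n)),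
        Real.sqrt (Real.cos (π / n))] : EuclideanSpace ℝ (Fin 3))) :
    (∀ j : ℕ, ‖ψ j‖ = 1) ∧ (∀ j : ℕ, inner ℝ (ψ j) (ψ (j + 1)) = (0 : ℝ)) := by
  have hn0 : (0:ℝ) < n := by positivity
  have hn5 : (5:ℝ) ≤ n := by exact_mod_cast hn
  have hc : 0 < Real.cos (π / n) := by
    apply Real.cos_pos_of_mem_Ioo
    constructor
    · have : 0 < π / n := by positivity
      linarith [Real.pi_pos]
    · have h1 : π / n ≤ π / 5 := by
        apply div_le_div_of_nonneg_left Real.pi_pos.le (by norm_num) hn5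
      have h2 : π / 5 < π / 2 := by
        apply div_lt_div_of_pos_left Real.pi_pos (by norm_num) (by norm_num)
      linarith
  set c := Real.cos (π / n) with hcdef
  have h1c : (0:ℝ) < 1 + c := by linarith
  have hsq : Real.sqrt (1 + c) ^ 2 = 1 + c := Real.sq_sqrt h1c.le
  have hsqc : Real.sqrt c ^ 2 = c := Real.sq_sqrt hc.le
  have hsne : Real.sqrt (1 + c) ≠ 0 := by positivity
  have hinner : ∀ j k : ℕ, inner ℝ (ψ j) (ψ k) =
      (Real.cos (j * ((n - 1) * π / n)) * Real.cos (k * ((n - 1) * π / n)) +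
       Real.sin (j * ((n - 1) * π / n)) * Real.sin (k * ((n - 1) * π / n)) + c) / (1 + c) := by
    intro j k
    simp only [hψ, PiLp.inner_apply, PiLp.smul_apply, Fin.sum_univ_three,
      Matrix.cons_val_zero, Matrix.cons_val_one, Matrix.head_cons, Matrix.cons_val_two,
      Matrix.tail_cons, smul_eq_mul, RCLike.inner_apply, conj_trivial]
    field_simp
    rw [hsq, hsqc]
  have hnorm : ∀ j : ℕ, ‖ψ j‖ = 1 := by
    intro j
    have h := hinner j j
    rw [real_inner_self_eq_norm_sq] at h
    have h2 : ‖ψ j‖ ^ 2 = 1 := by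
      rw [h]
      rw [div_eq_one_iff_eq (by linarith)]
      nlinarith [Real.sin_sq_add_cos_sq ((j:ℝ) * ((n - 1) * π / n))]
    nlinarith [norm_nonneg (ψ j)]
  refine ⟨hnorm, fun j => ?_⟩
  rw [hinner]
  have hang : (j+1 : ℕ) * ((n - 1) * π / n) = j * ((n - 1) * π / n) + (π - π / n) := by
    push_cast
    field_simp
  rw [hang, Real.cos_add, Real.sin_add, Real.cos_pi_sub, Real.sin_pi_sub]
  rw [div_eq_zero_iff]
  left
  nlinarith [Real.sin_sq_add_cos_sq ((j:ℝ) * ((n - 1) * π / n))]
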